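/- The acyclic orientations with singleton heads of the hypergraph of all k-subsets of [n] are in bijection with set compositions of [n] of the form ({a_1},{a_2},...,{a_{n−k+1}}, B) where a_1,...,a_{n−k+1} are distinct elements and B is the remaining (k−1)-element set: given such a composition, orient each hyperedge U with head the element of U appearing in the earliest part. -/

import Mathlib

/-- Given a sequence `a` of elements of `[n]` (the singleton parts of a set
composition `({a_1},...,{a_{n-k+1}}, B)`), orient the hyperedge `U` with head
the element of `U` appearing in the earliest part. -/
noncomputable def compositionHead {n k : ℕ} (a : Fin (n - k + 1) → Fin n)
    (U : Finset (Fin n)) (hU : U.Nonempty) : Fin n :=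
  if h : (Finset.univ.filter (fun j => a j ∈ U)).Nonempty then
    a ((Finset.univ.filter (fun j => a j ∈ U)).min' h)
  else U.min' hU


private lemma transGen_lt {α : Type*} {R : α → α → Prop} {f : α → ℕ}
    (h : ∀ x y, R x y → f x < f y) {x y : α} (hxy : Relation.TransGen R x y) :
    f x < f y := by
  induction hxy with
  | single h' => exact h _ _ h'
  | tail _ h' ih => exact ih.trans (h _ _ h')

private lemma key_lt {n p q x y : ℕ} (hx : x < n + 1) (hpq : p < q) :
    (n+1)*p + x < (n+1)*q + y :=
  calc (n+1)*p + x < (n+1)*p + (n+1) := by omega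
  _ = (n+1)*(p+1) := by ring
  _ ≤ (n+1)*q := Nat.mul_le_mul_left _ hpq
  _ ≤ (n+1)*q + y := Nat.le_add_right _ _

private lemma key_inj {n p q x y : ℕ} (hx : x < n+1) (hy : y < n+1)
    (h : (n+1)*p + x = (n+1)*q + y) : p = q ∧ x = y := by
  have hp : ((n+1)*p + x) / (n+1) = p := by
    rw [Nat.mul_add_div (by omega)]
    rw [Nat.div_eq_of_lt hx]
    omega
  have hq : ((n+1)*q + y) / (n+1) = q := by
    rw [Nat.mul_add_div (by omega)]
    rw [Nat.div_eq_of_lt hy]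
    omega
  have hpq : p = q := by rw [← hp, ← hq, h]
  subst hpq
  exact ⟨rfl, by omega⟩

private lemma filter_nonempty {n k : ℕ} (hk : 2 ≤ k) (hkn : k ≤ n)
    {a : Fin (n-k+1) → Fin n} (ha : Function.Injective a)
    {U : Finset (Fin n)} (hU : U.card = k) :
    (Finset.univ.filter (fun j => a j ∈ U)).Nonempty := by
  by_contra h
  rw [Finset.not_nonempty_iff_eq_empty, Finset.filter_eq_empty_iff] at h
  have hsub : U ⊆ Finset.univ \ Finset.univ.image a := by
    intro x hx
    simp only [Finset.mem_sdiff, Finset.mem_univ, true_and, Finset.mem_image]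
    rintro ⟨j, -, rfl⟩
    exact h (Finset.mem_univ j) hx
  have hle := Finset.card_le_card hsub
  rw [Finset.card_sdiff_of_subset (Finset.subset_univ _),
    Finset.card_image_of_injective _ ha, Finset.card_univ, Finset.card_univ,
    Fintype.card_fin, Fintype.card_fin, hU] at hle
  omega

private lemma compHead_eq {n k : ℕ} {a : Fin (n-k+1) → Fin n}
    {U : Finset (Fin n)} (hU : U.Nonempty) {j : Fin (n-k+1)}
    (hj : a j ∈ U) (hlt : ∀ i, i < j → a i ∉ U) :
    compositionHead a U hU = a j := by
  have hjF : j ∈ Finset.univ.filter (fun i => a i ∈ U) := by simp [hj]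
  have hF : (Finset.univ.filter (fun i => a i ∈ U)).Nonempty := ⟨j, hjF⟩
  rw [compositionHead, dif_pos hF]
  congr 1
  refine le_antisymm (Finset.min'_le _ _ hjF) (Finset.le_min' _ _ _ ?_)
  intro i hi
  by_contra hlt'
  exact hlt i (lt_of_not_ge hlt') (Finset.mem_filter.mp hi).2

/-- The acyclic orientations with singleton heads of the hypergraph of all
`k`-subsets of `[n]` are in bijection with set compositions
`({a_1},...,{a_{n-k+1}}, B)` (i.e. injective sequences of `n-k+1` distinct
elements, `B` being the remaining `k-1` elements): the map orients each
hyperedge `U` with head the element of `U` in the earliest part. -/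
theorem stmt4 (n k : ℕ) (hk : 2 ≤ k) (hkn : k ≤ n) :
    Set.BijOn
      (fun (a : Fin (n - k + 1) → Fin n)
          (U : {U : Finset (Fin n) // U.card = k}) =>
        compositionHead a U.1 (Finset.card_pos.mp (by rw [U.2]; omega)))
      {a : Fin (n - k + 1) → Fin n | Function.Injective a}
      {h : {U : Finset (Fin n) // U.card = k} → Fin n |
        (∀ U, h U ∈ U.1) ∧
        (∀ v : Fin n, ¬ Relation.TransGen
          (fun x y => ∃ U, h U = x ∧ y ∈ U.1 ∧ y ≠ x) v v)} := by
  have hm : n - k + 1 ≤ n := by omega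
  refine ⟨?_, ?_, ?_⟩
  · -- MapsTo
    intro a ha
    simp only [Set.mem_setOf_eq] at ha ⊢
    refine ⟨?_, ?_⟩
    · intro U
      show compositionHead a U.1 _ ∈ U.1
      by_cases hF : (Finset.univ.filter (fun j => a j ∈ U.1)).Nonempty
      · rw [compositionHead, dif_pos hF]
        exact (Finset.mem_filter.mp (Finset.min'_mem _ hF)).2
      · rw [compositionHead, dif_neg hF]
        exact Finset.min'_mem _ _
    · intro v hv
      set f : Fin n → ℕ := fun x =>
        if hx : ∃ j, a j = x then (Classical.choose hx : Fin (n-k+1)).val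
        else n - k + 1 with hfdef
      have hfa : ∀ j, f (a j) = j.val := by
        intro j
        have hex : ∃ j', a j' = a j := ⟨j, rfl⟩
        simp only [hfdef, dif_pos hex]
        exact congrArg Fin.val (ha (Classical.choose_spec hex))
      refine absurd (transGen_lt (f := f) ?_ hv) (lt_irrefl _)
      rintro x y ⟨U, hx, hyU, hyx⟩
      have hF := filter_nonempty hk hkn ha U.2
      rw [compositionHead, dif_pos hF] at hx
      set j₀ := (Finset.univ.filter (fun j => a j ∈ U.1)).min' hF with hj₀
      have hfx : f x = j₀.val := by rw [← hx, hfa]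
      by_cases hy : ∃ j, a j = y
      · obtain ⟨j', rfl⟩ := hy
        have hj'F : j' ∈ Finset.univ.filter (fun j => a j ∈ U.1) := by
          simp [hyU]
        have hle : j₀ ≤ j' := Finset.min'_le _ _ hj'F
        have hne : j₀ ≠ j' := by
          rintro rfl
          exact hyx hx
        rw [hfx, hfa]
        exact lt_of_le_of_ne (Fin.le_def.mp hle) (fun hc => hne (Fin.ext hc))
      · rw [hfx, hfdef]
        simp only [dif_neg hy]
        exact j₀.isLt
  · -- InjOn
    intro a ha a' ha' heq
    simp only [Set.mem_setOf_eq] at ha ha'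
    suffices H : ∀ jv : ℕ, ∀ hjv : jv < n - k + 1,
        a ⟨jv, hjv⟩ = a' ⟨jv, hjv⟩ by
      funext j
      exact H j.val j.isLt
    intro jv
    induction jv using Nat.strong_induction_on with
    | _ jv IH =>
      intro hjv
      set j : Fin (n-k+1) := ⟨jv, hjv⟩ with hjdef
      set S : Finset (Fin n) := (Finset.Iio j).image a with hSdef
      have haS : ∀ i : Fin (n-k+1), i < j → a i ∈ S := fun i hi =>
        Finset.mem_image_of_mem a (Finset.mem_Iio.mpr hi)
      have hIH : ∀ i : Fin (n-k+1), i < j → a i = a' i := fun i hi =>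
        IH i.val hi i.isLt
      have hSa' : ∀ i : Fin (n-k+1), i < j → a' i ∈ S := fun i hi => by
        rw [← hIH i hi]; exact haS i hi
      have haNotS : a j ∉ S := by
        intro hmem
        obtain ⟨i, hi, hie⟩ := Finset.mem_image.mp hmem
        exact absurd (ha hie) (ne_of_lt (Finset.mem_Iio.mp hi))
      have ha'NotS : a' j ∉ S := by
        intro hmem
        obtain ⟨i, hi, hie⟩ := Finset.mem_image.mp hmem
        rw [hIH i (Finset.mem_Iio.mp hi)] at hie
        exact absurd (ha' hie) (ne_of_lt (Finset.mem_Iio.mp hi))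
      set B0 : Finset (Fin n) := insert (a j) {a' j} with hB0def
      have hajB0 : a j ∈ B0 := Finset.mem_insert_self _ _
      have ha'jB0 : a' j ∈ B0 := Finset.mem_insert_of_mem (Finset.mem_singleton_self _)
      have hB0card : B0.card ≤ 2 := by
        refine (Finset.card_insert_le _ _).trans ?_
        simp
      have hScard : S.card ≤ jv := by
        refine Finset.card_image_le.trans ?_
        rw [Fin.card_Iio]
      set P : Finset (Fin n) := Finset.univ \ (S ∪ B0) with hPdef
      have hPcard : k - B0.card ≤ P.card := by
        rw [hPdef, Finset.card_sdiff_of_subset (Finset.subset_univ _), Finset.card_univ,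
          Fintype.card_fin]
        have h1 : (S ∪ B0).card ≤ S.card + B0.card := Finset.card_union_le _ _
        omega
      obtain ⟨E, hEP, hEcard⟩ := Finset.exists_subset_card_eq hPcard
      set U : Finset (Fin n) := B0 ∪ E with hUdef
      have hdisj : Disjoint B0 E := by
        refine Finset.disjoint_left.mpr fun x hxB hxE => ?_
        have := hEP hxE
        rw [hPdef, Finset.mem_sdiff] at this
        exact this.2 (Finset.mem_union_right _ hxB)
      have hUcard : U.card = k := by
        rw [hUdef, Finset.card_union_of_disjoint hdisj, hEcard]
        omega
      have hUne : U.Nonempty := Finset.card_pos.mp (by omega)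
      have hUS : ∀ x ∈ S, x ∉ U := by
        intro x hxS hxU
        rcases Finset.mem_union.mp hxU with hxB | hxE
        · rcases Finset.mem_insert.mp hxB with rfl | hxB
          · exact haNotS hxS
          · rw [Finset.mem_singleton.mp hxB] at hxS
            exact ha'NotS hxS
        · have := hEP hxE
          rw [hPdef, Finset.mem_sdiff] at this
          exact this.2 (Finset.mem_union_left _ hxS)
      have hajU : a j ∈ U := Finset.mem_union_left _ hajB0
      have ha'jU : a' j ∈ U := Finset.mem_union_left _ ha'jB0
      have hNotU : ∀ i, i < j → a i ∉ U := fun i hi => hUS _ (haS i hi)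
      have hNotU' : ∀ i, i < j → a' i ∉ U := fun i hi => hUS _ (hSa' i hi)
      have h1 := congrFun heq ⟨U, hUcard⟩
      simp only at h1
      rw [compHead_eq _ hajU hNotU, compHead_eq _ ha'jU hNotU'] at h1
      exact h1
  · -- SurjOn
    classical
    intro h hh
    simp only [Set.mem_setOf_eq] at hh
    obtain ⟨hmem, hacyc⟩ := hh
    set Rel : Fin n → Fin n → Prop :=
      fun x y => ∃ U, h U = x ∧ y ∈ U.1 ∧ y ≠ x with hReldef
    set g : Fin n → ℕ := fun x =>
      (Finset.univ.filter (fun y => Relation.TransGen Rel y x)).card with hgdef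
    have hgRel : ∀ x y, Rel x y → g x < g y := by
      intro x y hxy
      apply Finset.card_lt_card
      have hsub : (Finset.univ.filter fun z => Relation.TransGen Rel z x) ⊆
          (Finset.univ.filter fun z => Relation.TransGen Rel z y) := by
        intro z hz
        simp only [Finset.mem_filter, Finset.mem_univ, true_and] at hz ⊢
        exact hz.tail hxy
      refine (Finset.ssubset_iff_of_subset hsub).mpr ⟨x, ?_, ?_⟩
      · simp only [Finset.mem_filter, Finset.mem_univ, true_and]
        exact Relation.TransGen.single hxy
      · simp only [Finset.mem_filter, Finset.mem_univ, true_and]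
        exact hacyc x
    set w : Fin n → ℕ := fun x => (n+1) * g x + x.val with hwdef
    have hwRel : ∀ x y, Rel x y → w x < w y := fun x y hxy =>
      key_lt (x.isLt.trans (Nat.lt_succ_self n)) (hgRel x y hxy)
    have hwinj : Function.Injective w := by
      intro x y hxy
      obtain ⟨-, h2⟩ := key_inj (x.isLt.trans (Nat.lt_succ_self n))
        (y.isLt.trans (Nat.lt_succ_self n)) hxy
      exact Fin.ext h2
    have hn0 : 0 < n := by omega
    set ρ : Fin n → Fin n := fun x =>
      ⟨(Finset.univ.filter (fun y => w y < w x)).card, by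
        have hss : (Finset.univ.filter fun y => w y < w x) ⊂ Finset.univ :=
          Finset.filter_ssubset.mpr ⟨x, Finset.mem_univ x, lt_irrefl _⟩
        have := Finset.card_lt_card hss
        rwa [Finset.card_univ, Fintype.card_fin] at this⟩ with hρdef
    have hρmono : ∀ x y, w x < w y → ρ x < ρ y := by
      intro x y hxy
      show (Finset.univ.filter fun z => w z < w x).card < (Finset.univ.filter fun z => w z < w y).card
      apply Finset.card_lt_card
      have hsub : (Finset.univ.filter fun z => w z < w x) ⊆
          (Finset.univ.filter fun z => w z < w y) := by
        intro z hz
        simp only [Finset.mem_filter, Finset.mem_univ, true_and] at hz ⊢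
        exact hz.trans hxy
      refine (Finset.ssubset_iff_of_subset hsub).mpr ⟨x, ?_, ?_⟩
      · simp only [Finset.mem_filter, Finset.mem_univ, true_and]; exact hxy
      · simp only [Finset.mem_filter, Finset.mem_univ, true_and]
        exact lt_irrefl _
    have hρle : ∀ x y, w x ≤ w y → (ρ x).val ≤ (ρ y).val := by
      intro x y hxy
      show (Finset.univ.filter fun z => w z < w x).card ≤ (Finset.univ.filter fun z => w z < w y).card
      apply Finset.card_le_card
      intro z hz
      simp only [Finset.mem_filter, Finset.mem_univ, true_and] at hz ⊢
      exact lt_of_lt_of_le hz hxy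
    have hρinj : Function.Injective ρ := by
      intro x y hxy
      rcases lt_trichotomy (w x) (w y) with hlt | heq | hgt
      · exact absurd hxy (ne_of_lt (hρmono x y hlt))
      · exact hwinj heq
      · exact absurd hxy.symm (ne_of_lt (hρmono y x hgt))
    set ψ : Fin n ≃ Fin n :=
      Equiv.ofBijective ρ (Finite.injective_iff_bijective.mp hρinj) with hψdef
    have hψρ : ∀ x, ψ x = ρ x := fun x => rfl
    set a : Fin (n-k+1) → Fin n := fun i => ψ.symm (Fin.castLE hm i) with hadef
    have hainj : Function.Injective a := by
      intro i i' hii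
      have h2 := ψ.symm.injective hii
      have h3 := congrArg Fin.val h2
      exact Fin.ext h3
    refine ⟨a, hainj, ?_⟩
    funext U
    obtain ⟨U, hU⟩ := U
    simp only
    have hUne : U.Nonempty := Finset.card_pos.mp (by omega)
    obtain ⟨x₀, hx₀U, hx₀min⟩ := Finset.exists_min_image U w hUne
    have hhU : h ⟨U, hU⟩ = x₀ := by
      by_contra hne
      have hr : Rel (h ⟨U, hU⟩) x₀ := ⟨⟨U, hU⟩, rfl, hx₀U, fun hc => hne hc.symm⟩
      exact absurd (hx₀min _ (hmem ⟨U, hU⟩)) (not_le.mpr (hwRel _ _ hr))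
    have hρx₀ : (ρ x₀).val < n - k + 1 := by
      have hsub : (Finset.univ.filter fun y => w y < w x₀) ⊆ Finset.univ \ U := by
        intro y hy
        simp only [Finset.mem_filter, Finset.mem_univ, true_and] at hy
        rw [Finset.mem_sdiff]
        exact ⟨Finset.mem_univ y, fun hyU => absurd (hx₀min y hyU) (not_le.mpr hy)⟩
      have hle := Finset.card_le_card hsub
      rw [Finset.card_sdiff_of_subset (Finset.subset_univ _), Finset.card_univ,
        Fintype.card_fin, hU] at hle
      show (Finset.univ.filter fun y => w y < w x₀).card < n - k + 1
      omega
    set j₀ : Fin (n-k+1) := ⟨(ρ x₀).val, hρx₀⟩ with hj₀def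
    have hcast : Fin.castLE hm j₀ = ρ x₀ := Fin.ext rfl
    have haj₀ : a j₀ = x₀ := by
      rw [hadef]
      simp only
      rw [hcast, ← hψρ]
      exact ψ.symm_apply_apply x₀
    have hrank : ∀ i : Fin (n-k+1), ρ (a i) = Fin.castLE hm i := by
      intro i
      rw [← hψρ, hadef]
      exact ψ.apply_symm_apply _
    rw [compHead_eq _ (show a j₀ ∈ U by rw [haj₀]; exact hx₀U) ?_]
    · exact haj₀.trans hhU.symm
    · intro i hi haiU
      have hle : w x₀ ≤ w (a i) := hx₀min _ haiU
      have := hρle _ _ hle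
      rw [hrank i] at this
      have h4 : (ρ x₀).val ≤ i.val := this
      have h5 : i.val < (ρ x₀).val := hi
      omega
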